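/- Let λ : 𝕋^d → ℝ be continuous with 1/D ≤ λ_b ≤ q < 1 for all b (D ≥ 1), and let L be the normalized homological operator, L h(b,x) = −Σ_{n=0}^{∞} P_n(b) h(F₀^n(b,x)). Then L is bounded in the fiberwise Lipschitz seminorm: Lip_x(Lh) ≤ (D/(1 − q²)) Lip_x h for every h Lipschitz in x. Moreover, if h(b,·) ∈ C^l([0,1]) for every b, then Lh(b,·) ∈ C^l([0,1]) with (Lh)^{(l)}(b,x) = −Σ_{n=0}^{∞} P_n(b) Π_n(b)^l h^{(l)}(F₀^n(b,x)), and ||(Lh)^{(l)}||_C ≤ (D/(1 − q^{l+1})) ||h^{(l)}||_C. -/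

import Mathlib

open Set Function

noncomputable section

/-- The `d`-dimensional torus `ℝ^d/ℤ^d` with the (sup-)product metric. -/
abbrev Torus (d : ℕ) := Fin d → AddCircle (1 : ℝ)

/-- The map of the torus induced by an integer matrix. -/
def inducedMap {d : ℕ} (M : Matrix (Fin d) (Fin d) ℤ) (b : Torus d) : Torus d :=
  fun i => ∑ j, M i j • b j

/-- Hyperbolicity of an integer matrix: determinant `±1` and no eigenvalue of modulus `1`. -/
def IsHyperbolic {d : ℕ} (M : Matrix (Fin d) (Fin d) ℤ) : Prop :=
  (M.det = 1 ∨ M.det = -1) ∧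
  ∀ z : ℂ, ((M.map (fun n : ℤ => (n : ℂ))).charpoly).IsRoot z → ‖z‖ ≠ 1

/-- `Π_n(b) = λ_b λ_{Ab} ⋯ λ_{A^{n-1}b}` (and `Π_0(b) = 1`). -/
def PiProd {d : ℕ} (A : Torus d → Torus d) (lam : Torus d → ℝ) (n : ℕ) (b : Torus d) : ℝ :=
  ∏ k ∈ Finset.range n, lam (A^[k] b)

/-- `P_n(b) = Π_n(b) / λ_{A^n b}`. -/
def Pfun {d : ℕ} (A : Torus d → Torus d) (lam : Torus d → ℝ) (n : ℕ) (b : Torus d) : ℝ :=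
  PiProd A lam n b / lam (A^[n] b)

/-- The normalized homological operator
`Lh(b,x) = −Σ_{n≥0} P_n(b) h(F₀^n(b,x)) = −Σ_{n≥0} P_n(b) h(A^n b, Π_n(b) x)`. -/
def homOp {d : ℕ} (A : Torus d → Torus d) (lam : Torus d → ℝ) (h : Torus d → ℝ → ℝ) :
    Torus d → ℝ → ℝ :=
  fun b x => -∑' n : ℕ, Pfun A lam n b * h (A^[n] b) (PiProd A lam n b * x)

lemma mapsTo_mul_Icc {r : ℝ} (hr0 : 0 ≤ r) (hr1 : r ≤ 1) :
    MapsTo (fun y => r * y) (Icc (0:ℝ) 1) (Icc 0 1) := by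
  intro y hy
  constructor
  · exact mul_nonneg hr0 hy.1
  · calc r * y ≤ r * 1 := by nlinarith [hy.1, hy.2]
    _ ≤ 1 := by linarith

lemma iter_scale {r : ℝ} (hr0 : 0 < r) (hr1 : r ≤ 1) :
    ∀ (j : ℕ) (h : ℝ → ℝ), ContDiffOn ℝ j h (Icc 0 1) →
      ∀ x ∈ Icc (0:ℝ) 1,
        iteratedDerivWithin j (fun y => h (r * y)) (Icc 0 1) x
          = r ^ j * iteratedDerivWithin j h (Icc 0 1) (r * x) := by
  have hmaps := mapsTo_mul_Icc hr0.le hr1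
  have hsU : UniqueDiffOn ℝ (Icc (0:ℝ) 1) := uniqueDiffOn_Icc one_pos
  intro j
  induction j with
  | zero => intro h _ x hx; simp
  | succ j IH =>
    intro h hh x hx
    have hh' : ContDiffOn ℝ j (derivWithin h (Icc 0 1)) (Icc 0 1) :=
      hh.derivWithin hsU (by exact_mod_cast le_rfl)
    have hdc : Set.EqOn (derivWithin (fun z => h (r * z)) (Icc 0 1))
        (fun y => r * derivWithin h (Icc 0 1) (r * y)) (Icc 0 1) := by
      intro y hy
      have hdiff : DifferentiableWithinAt ℝ h (Icc 0 1) (r * y) :=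
        (hh.differentiableOn (by simp)) _ (hmaps hy)
      have h1 : HasDerivWithinAt h (derivWithin h (Icc 0 1) (r * y)) (Icc 0 1) (r * y) :=
        hdiff.hasDerivWithinAt
      have h2 : HasDerivWithinAt (fun z : ℝ => r * z) r (Icc 0 1) y := by
        simpa using ((hasDerivAt_id y).const_mul r).hasDerivWithinAt
      have h3 := h1.comp y h2 hmaps
      have := h3.derivWithin (hsU y hy)
      simpa [Function.comp_def, mul_comm] using this
    have hcomp : ContDiffOn ℝ j (fun y => derivWithin h (Icc 0 1) (r * y)) (Icc 0 1) := by
      exact hh'.comp ((contDiff_const.mul contDiff_id).contDiffOn) hmaps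
    rw [iteratedDerivWithin_succ',
      iteratedDerivWithin_congr hdc hx,
      iteratedDerivWithin_const_mul hx hsU r (hcomp x hx),
      IH _ hh' x hx,
      iteratedDerivWithin_succ']
    ring


open MeasureTheory intervalIntegral in
lemma tsum_key : ∀ (l : ℕ) (f : ℕ → ℝ → ℝ) (u : ℕ → ℕ → ℝ),
    (∀ n, ContDiffOn ℝ l (f n) (Icc 0 1)) →
    (∀ j, j ≤ l → Summable (u j)) →
    (∀ j, j ≤ l → ∀ n, ∀ x ∈ Icc (0:ℝ) 1, |iteratedDerivWithin j (f n) (Icc 0 1) x| ≤ u j n) →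
    ContDiffOn ℝ l (fun x => ∑' n, f n x) (Icc 0 1) ∧
    ∀ x ∈ Icc (0:ℝ) 1, iteratedDerivWithin l (fun x => ∑' n, f n x) (Icc 0 1) x
        = ∑' n, iteratedDerivWithin l (f n) (Icc 0 1) x := by
  intro l
  induction l with
  | zero =>
    intro f u hf hu hb
    have hc : ContinuousOn (fun x => ∑' n, f n x) (Icc 0 1) := by
      refine continuousOn_tsum (fun n => (hf n).continuousOn) (hu 0 le_rfl) ?_
      intro n x hx
      have := hb 0 le_rfl n x hx
      simpa [iteratedDerivWithin_zero, Real.norm_eq_abs] using this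
    refine ⟨by simpa [contDiffOn_zero] using hc, ?_⟩
    intro x hx; simp [iteratedDerivWithin_zero]
  | succ l IH =>
    intro f u hf hu hb
    have hsU : UniqueDiffOn ℝ (Icc (0:ℝ) 1) := uniqueDiffOn_Icc one_pos
    have hcast : ((l : WithTop ℕ∞) + 1) = ((l + 1 : ℕ) : WithTop ℕ∞) := by push_cast; ring
    set s : Set ℝ := Icc (0:ℝ) 1 with hs_def
    set g : ℕ → ℝ → ℝ := fun n => derivWithin (f n) s with hg_def
    have hg : ∀ n, ContDiffOn ℝ l (g n) s := fun n =>
      (hf n).derivWithin hsU (by rw [hcast])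
    have hgb : ∀ j, j ≤ l → ∀ n, ∀ x ∈ s, |iteratedDerivWithin j (g n) s x| ≤ u (j + 1) n := by
      intro j hj n x hx
      have := hb (j + 1) (by omega) n x hx
      rwa [iteratedDerivWithin_succ'] at this
    obtain ⟨hGsm, hGeq⟩ := IH g (fun j => u (j + 1)) hg (fun j hj => hu (j + 1) (by omega)) hgb
    set G : ℝ → ℝ := fun x => ∑' n, g n x with hG_def
    have hGcont : ContinuousOn G s := hGsm.continuousOn
    have hu0nn : ∀ j, j ≤ l + 1 → ∀ n, 0 ≤ u j n := by
      intro j hj n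
      exact le_trans (abs_nonneg _) (hb j hj n 0 ⟨le_rfl, zero_le_one⟩)
    have hsum_f : ∀ x ∈ s, Summable (fun n => f n x) := by
      intro x hx
      refine Summable.of_norm_bounded (hu 0 (by omega)) (fun n => ?_)
      have := hb 0 (by omega) n x hx
      simpa [iteratedDerivWithin_zero, Real.norm_eq_abs] using this
    have hgcont : ∀ n, ContinuousOn (g n) s := fun n => (hg n).continuousOn
    have hgle : ∀ n, ∀ x ∈ s, |g n x| ≤ u 1 n := by
      intro n x hx
      have := hb 1 (by omega) n x hx
      rwa [iteratedDerivWithin_one] at this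
    -- FTC identity
    have hInt : ∀ y ∈ s, (∑' n, f n y) = (∑' n, f n 0) + ∫ t in (0:ℝ)..y, G t := by
      intro y hy
      have h0s : (0:ℝ) ∈ s := ⟨le_rfl, zero_le_one⟩
      have hIccsub : Icc (0:ℝ) y ⊆ s := Icc_subset_Icc le_rfl hy.2
      have hen : ∀ n, ∫ t in (0:ℝ)..y, g n t = f n y - f n 0 := by
        intro n
        refine integral_eq_sub_of_hasDeriv_right_of_le hy.1
          (((hf n).continuousOn).mono hIccsub) ?_ ?_
        · intro t ht
          have hts : t ∈ s := ⟨ht.1.le, ht.2.le.trans hy.2⟩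
          have hdiff : DifferentiableWithinAt ℝ (f n) s t :=
            ((hf n).differentiableOn (by rw [← hcast]; simp)) t hts
          have h1 : HasDerivWithinAt (f n) (g n t) s t := hdiff.hasDerivWithinAt
          have h2 : HasDerivAt (f n) (g n t) t :=
            h1.hasDerivAt (Icc_mem_nhds ht.1 (lt_of_lt_of_le ht.2 hy.2))
          exact h2.hasDerivWithinAt
        · exact ((hgcont n).mono (by rw [uIcc_of_le hy.1]; exact hIccsub)).intervalIntegrable
      have hintg : ∀ n, IntegrableOn (g n) (Ioc 0 y) volume :=
        fun n => (((hgcont n).mono hIccsub).integrableOn_Icc).mono_set Ioc_subset_Icc_self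
      have hnorm_sum : Summable fun n => ∫ t in Ioc (0:ℝ) y, ‖g n t‖ := by
        refine Summable.of_nonneg_of_le (fun n => integral_nonneg (fun t => norm_nonneg _))
          (fun n => ?_) (hu 1 (by omega))
        have hle : ∫ t in Ioc (0:ℝ) y, ‖g n t‖ ≤ ∫ _t in Ioc (0:ℝ) y, u 1 n := by
          refine setIntegral_mono_on (hintg n).norm (integrableOn_const ?_)
            measurableSet_Ioc ?_
          · rw [Real.volume_Ioc]; exact ENNReal.ofReal_ne_top
          · intro t ht
            exact hgle n t ⟨ht.1.le, ht.2.trans hy.2⟩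
        refine hle.trans ?_
        rw [setIntegral_const, smul_eq_mul, measureReal_def, Real.volume_Ioc]
        have h1 : ENNReal.toReal (ENNReal.ofReal (y - 0)) ≤ 1 := by
          rw [ENNReal.toReal_ofReal (by linarith [hy.1])]; linarith [hy.2]
        nlinarith [hu0nn 1 (by omega) n]
      have hswap : HasSum (fun n => ∫ t in Ioc (0:ℝ) y, g n t) (∫ t in Ioc (0:ℝ) y, G t) :=
        hasSum_integral_of_summable_integral_norm hintg hnorm_sum
      have hswap' : ∑' n, ∫ t in (0:ℝ)..y, g n t = ∫ t in (0:ℝ)..y, G t := by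
        rw [integral_of_le hy.1]
        rw [show (fun n => ∫ t in (0:ℝ)..y, g n t) = fun n => ∫ t in Ioc (0:ℝ) y, g n t from
          funext fun n => integral_of_le hy.1]
        exact hswap.tsum_eq
      have hsub : ∑' n, (f n y - f n 0) = (∑' n, f n y) - ∑' n, f n 0 :=
        Summable.tsum_sub (hsum_f y hy) (hsum_f 0 h0s)
      calc (∑' n, f n y) = (∑' n, f n 0) + ((∑' n, f n y) - ∑' n, f n 0) := by ring
        _ = (∑' n, f n 0) + ∑' n, (f n y - f n 0) := by rw [hsub]
        _ = (∑' n, f n 0) + ∑' n, ∫ t in (0:ℝ)..y, g n t := by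
            congr 1; exact tsum_congr fun n => (hen n).symm
        _ = (∑' n, f n 0) + ∫ t in (0:ℝ)..y, G t := by rw [hswap']
    -- derivative of the primitive
    have hFd : ∀ x ∈ s, HasDerivWithinAt (fun x => ∑' n, f n x) (G x) s x := by
      intro x hx
      have hGint : IntervalIntegrable G volume 0 x :=
        (hGcont.mono (by rw [uIcc_of_le hx.1]; exact Icc_subset_Icc le_rfl hx.2)).intervalIntegrable
      have hΦ : HasDerivWithinAt (fun y => (∑' n, f n 0) + ∫ t in (0:ℝ)..y, G t) (G x) s x := by
        rcases eq_or_lt_of_le hx.1 with h0 | h0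
        · -- x = 0
          have hmem0 : s ∈ nhdsWithin (0:ℝ) (Ioi 0) :=
            Icc_mem_nhdsGT_of_mem ⟨le_rfl, one_pos⟩
          have hmeas : StronglyMeasurableAtFilter G (nhdsWithin (0:ℝ) (Ioi 0)) volume :=
            ⟨s, hmem0, (hGcont.aestronglyMeasurable measurableSet_Icc)⟩
          have hcw : ContinuousWithinAt G (Ioi (0:ℝ)) 0 :=
            (hGcont 0 ⟨le_rfl, zero_le_one⟩).mono_of_mem_nhdsWithin hmem0
          have h1 : HasDerivWithinAt (fun y => ∫ t in (0:ℝ)..y, G t) (G 0) (Ici 0) 0 :=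
            integral_hasDerivWithinAt_right (f := G) (a := 0) (b := 0)
              (s := Ici (0:ℝ)) (t := Ioi (0:ℝ)) (by simp) hmeas hcw
          rw [← h0]
          exact ((h1.mono Icc_subset_Ici_self).const_add _)
        rcases eq_or_lt_of_le hx.2 with h1 | h1
        · -- x = 1
          have hmem1 : s ∈ nhdsWithin (1:ℝ) (Iic 1) :=
            Icc_mem_nhdsLE_of_mem ⟨one_pos, le_rfl⟩
          have hmeas : StronglyMeasurableAtFilter G (nhdsWithin (1:ℝ) (Iic 1)) volume :=
            ⟨s, hmem1, (hGcont.aestronglyMeasurable measurableSet_Icc)⟩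
          have hcw : ContinuousWithinAt G (Iic (1:ℝ)) 1 :=
            (hGcont 1 ⟨zero_le_one, le_rfl⟩).mono_of_mem_nhdsWithin hmem1
          have h2 : HasDerivWithinAt (fun y => ∫ t in (0:ℝ)..y, G t) (G 1) (Iic 1) 1 := by
            have hGint1 : IntervalIntegrable G volume 0 1 :=
              (hGcont.mono (by rw [uIcc_of_le zero_le_one])).intervalIntegrable
            exact integral_hasDerivWithinAt_right (s := Iic (1:ℝ)) (t := Iic (1:ℝ))
              hGint1 hmeas hcw
          rw [h1]
          exact ((h2.mono Icc_subset_Iic_self).const_add _)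
        · -- interior
          have hmem : s ∈ nhds x := Icc_mem_nhds h0 h1
          have hmeas : StronglyMeasurableAtFilter G (nhds x) volume :=
            ⟨s, hmem, hGcont.aestronglyMeasurable measurableSet_Icc⟩
          have hca : ContinuousAt G x := hGcont.continuousAt hmem
          exact ((integral_hasDerivAt_right hGint hmeas hca).hasDerivWithinAt.const_add _)
      exact hΦ.congr (fun y hy => hInt y hy) (hInt x hx)
    have hdF : ∀ x ∈ s, derivWithin (fun x => ∑' n, f n x) s x = G x :=
      fun x hx => (hFd x hx).derivWithin (hsU x hx)
    constructor
    · rw [← hcast, contDiffOn_succ_iff_derivWithin hsU]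
      refine ⟨fun x hx => (hFd x hx).differentiableWithinAt, ?_, hGsm.congr hdF⟩
      intro hω
      exact absurd hω (by simp)
    · intro x hx
      rw [iteratedDerivWithin_succ', iteratedDerivWithin_congr hdF hx, hGeq x hx]
      exact tsum_congr fun n => (congrFun iteratedDerivWithin_succ' x).symm

lemma mapsTo_mul_Icc' {r : ℝ} (hr0 : 0 ≤ r) (hr1 : r ≤ 1) :
    MapsTo (fun y => r * y) (Icc (0:ℝ) 1) (Icc 0 1) := by
  intro y hy
  refine ⟨mul_nonneg hr0 hy.1, ?_⟩
  calc r * y ≤ r * 1 := mul_le_mul_of_nonneg_left hy.2 hr0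
    _ = r := mul_one r
    _ ≤ 1 := hr1


/-- the normalized homological operator is bounded in the fiberwise Lipschitz
seminorm, `Lip_x(Lh) ≤ (D/(1−q²)) Lip_x h`; moreover it preserves fiberwise `C^l` smoothness,
with `(Lh)^{(l)}(b,x) = −Σ_n P_n(b) Π_n(b)^l h^{(l)}(F₀^n(b,x))` and
`‖(Lh)^{(l)}‖_C ≤ (D/(1−q^{l+1})) ‖h^{(l)}‖_C`. -/
theorem statement14 {d : ℕ} (M : Matrix (Fin d) (Fin d) ℤ) (hM : IsHyperbolic M)
    (A : Torus d → Torus d) (hAdef : A = inducedMap M)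
    (lam : Torus d → ℝ) (hlamc : Continuous lam)
    (q D : ℝ) (hq : q < 1) (hD : 1 ≤ D)
    (hlam : ∀ b, 1 / D ≤ lam b ∧ lam b ≤ q)
    (h : Torus d → ℝ → ℝ)
    (H0 : ℝ) (hbound : ∀ b : Torus d, ∀ x ∈ Icc (0:ℝ) 1, |h b x| ≤ H0) :
    (∀ Lh : ℝ, 0 ≤ Lh →
      (∀ b : Torus d, ∀ x ∈ Icc (0:ℝ) 1, ∀ y ∈ Icc (0:ℝ) 1, |h b x - h b y| ≤ Lh * |x - y|) →
      ∀ b : Torus d, ∀ x ∈ Icc (0:ℝ) 1, ∀ y ∈ Icc (0:ℝ) 1,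
        |homOp A lam h b x - homOp A lam h b y| ≤ D / (1 - q ^ 2) * Lh * |x - y|) ∧
    (∀ l : ℕ,
      (∀ b, ContDiffOn ℝ l (h b) (Icc 0 1)) →
      ∀ Hd : ℕ → ℝ,
        (∀ j : ℕ, j ≤ l → ∀ b : Torus d, ∀ x ∈ Icc (0:ℝ) 1,
          |iteratedDerivWithin j (h b) (Icc 0 1) x| ≤ Hd j) →
        (∀ b, ContDiffOn ℝ l (homOp A lam h b) (Icc 0 1)) ∧
        (∀ b : Torus d, ∀ x ∈ Icc (0:ℝ) 1,
          iteratedDerivWithin l (homOp A lam h b) (Icc 0 1) x =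
            -∑' n : ℕ, Pfun A lam n b * PiProd A lam n b ^ l *
              iteratedDerivWithin l (h (A^[n] b)) (Icc 0 1) (PiProd A lam n b * x)) ∧
        (∀ b : Torus d, ∀ x ∈ Icc (0:ℝ) 1,
          |iteratedDerivWithin l (homOp A lam h b) (Icc 0 1) x| ≤
            D / (1 - q ^ (l + 1)) * Hd l)) := by
  have hD0 : (0:ℝ) < D := lt_of_lt_of_le one_pos hD
  have hlam_pos : ∀ c, 0 < lam c := fun c => lt_of_lt_of_le (by positivity) (hlam c).1
  have hq0 : 0 < q := lt_of_lt_of_le (hlam_pos (fun _ => 0)) (hlam _).2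
  have hPi_pos : ∀ n b, 0 < PiProd A lam n b :=
    fun n b => Finset.prod_pos (fun k _ => hlam_pos _)
  have hPi_le : ∀ n b, PiProd A lam n b ≤ q ^ n := by
    intro n b
    calc PiProd A lam n b ≤ ∏ _k ∈ Finset.range n, q :=
          Finset.prod_le_prod (fun k _ => (hlam_pos _).le) (fun k _ => (hlam _).2)
      _ = q ^ n := by simp
  have hPi1 : ∀ n b, PiProd A lam n b ≤ 1 :=
    fun n b => le_trans (hPi_le n b) (pow_le_one₀ hq0.le hq.le)
  have hinv : ∀ c, 1 / lam c ≤ D := by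
    intro c
    rw [div_le_iff₀ (hlam_pos c)]
    have h1 := (hlam c).1
    rw [div_le_iff₀ hD0] at h1
    nlinarith
  have hP_nonneg : ∀ n b, 0 ≤ Pfun A lam n b :=
    fun n b => div_nonneg (hPi_pos n b).le (hlam_pos _).le
  have hP_le : ∀ n b, Pfun A lam n b ≤ D * q ^ n := by
    intro n b
    have he : Pfun A lam n b = PiProd A lam n b * (1 / lam (A^[n] b)) := by
      rw [Pfun]; ring
    rw [he]
    calc PiProd A lam n b * (1 / lam (A^[n] b)) ≤ q ^ n * D :=
          mul_le_mul (hPi_le n b) (hinv _) (one_div_nonneg.2 (hlam_pos _).le) (pow_nonneg hq0.le n)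
      _ = D * q ^ n := mul_comm _ _
  have hmapsPi : ∀ n b, ∀ x ∈ Icc (0:ℝ) 1, PiProd A lam n b * x ∈ Icc (0:ℝ) 1 :=
    fun n b => mapsTo_mul_Icc' (hPi_pos n b).le (hPi1 n b)
  have hH0 : 0 ≤ H0 := le_trans (abs_nonneg _) (hbound (fun _ => 0) 0 ⟨le_rfl, zero_le_one⟩)
  have hsummand : ∀ b, ∀ z ∈ Icc (0:ℝ) 1,
      Summable (fun n => Pfun A lam n b * h (A^[n] b) (PiProd A lam n b * z)) := by
    intro b z hz
    refine Summable.of_norm_bounded (g := fun n => (D * H0) * q ^ n)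
      ((summable_geometric_of_lt_one hq0.le hq).mul_left _) (fun n => ?_)
    rw [Real.norm_eq_abs, abs_mul, abs_of_nonneg (hP_nonneg n b)]
    calc Pfun A lam n b * |h (A^[n] b) (PiProd A lam n b * z)| ≤ (D * q ^ n) * H0 :=
          mul_le_mul (hP_le n b) (hbound _ _ (hmapsPi n b z hz)) (abs_nonneg _) (by positivity)
      _ = D * H0 * q ^ n := by ring
  constructor
  · -- Lipschitz bound
    intro Lh hLh0 hLip b x hx y hy
    have hq2 : q ^ 2 < 1 := pow_lt_one₀ hq0.le hq two_ne_zero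
    have hd1 : ∀ n : ℕ,
        |Pfun A lam n b * h (A^[n] b) (PiProd A lam n b * x)
          - Pfun A lam n b * h (A^[n] b) (PiProd A lam n b * y)|
          ≤ (D * Lh * |x - y|) * (q ^ 2) ^ n := by
      intro n
      rw [← mul_sub, abs_mul, abs_of_nonneg (hP_nonneg n b)]
      have hdiff : |h (A^[n] b) (PiProd A lam n b * x) - h (A^[n] b) (PiProd A lam n b * y)|
          ≤ Lh * (PiProd A lam n b * |x - y|) := by
        have := hLip (A^[n] b) _ (hmapsPi n b x hx) _ (hmapsPi n b y hy)
        rwa [← mul_sub, abs_mul, abs_of_pos (hPi_pos n b)] at this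
      calc Pfun A lam n b * |h (A^[n] b) (PiProd A lam n b * x)
            - h (A^[n] b) (PiProd A lam n b * y)|
          ≤ (D * q ^ n) * (Lh * (q ^ n * |x - y|)) := by
            refine mul_le_mul (hP_le n b) (hdiff.trans ?_) (abs_nonneg _) (by positivity)
            exact mul_le_mul_of_nonneg_left
              (mul_le_mul_of_nonneg_right (hPi_le n b) (abs_nonneg _)) hLh0
        _ = (D * Lh * |x - y|) * (q ^ 2) ^ n := by
            rw [← pow_mul]
            rw [show 2 * n = n + n by ring, pow_add]
            ring
    have hgsum : HasSum (fun n : ℕ => (D * Lh * |x - y|) * (q ^ 2) ^ n)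
        ((D * Lh * |x - y|) * (1 - q ^ 2)⁻¹) :=
      (hasSum_geometric_of_lt_one (by positivity) hq2).mul_left _
    have key : |∑' n : ℕ, (Pfun A lam n b * h (A^[n] b) (PiProd A lam n b * x)
        - Pfun A lam n b * h (A^[n] b) (PiProd A lam n b * y))|
        ≤ (D * Lh * |x - y|) * (1 - q ^ 2)⁻¹ := by
      have := tsum_of_norm_bounded hgsum (fun n => by
        rw [Real.norm_eq_abs]; exact hd1 n)
      simpa using this
    have heq : homOp A lam h b x - homOp A lam h b y =
        -(∑' n : ℕ, (Pfun A lam n b * h (A^[n] b) (PiProd A lam n b * x)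
          - Pfun A lam n b * h (A^[n] b) (PiProd A lam n b * y))) := by
      simp only [homOp]
      rw [Summable.tsum_sub (hsummand b x hx) (hsummand b y hy)]
      ring
    rw [heq, abs_neg]
    refine key.trans (le_of_eq ?_)
    rw [div_eq_mul_inv]
    ring
  · -- smoothness
    intro l hsm Hd hHd
    have hsU : UniqueDiffOn ℝ (Icc (0:ℝ) 1) := uniqueDiffOn_Icc one_pos
    have hq1 : ∀ j : ℕ, q ^ (j + 1) < 1 := fun j => pow_lt_one₀ hq0.le hq (Nat.succ_ne_zero j)
    have main : ∀ b : Torus d, ContDiffOn ℝ l (homOp A lam h b) (Icc 0 1) ∧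
        (∀ x ∈ Icc (0:ℝ) 1,
          iteratedDerivWithin l (homOp A lam h b) (Icc 0 1) x =
            -∑' n : ℕ, Pfun A lam n b * PiProd A lam n b ^ l *
              iteratedDerivWithin l (h (A^[n] b)) (Icc 0 1) (PiProd A lam n b * x)) ∧
        (∀ x ∈ Icc (0:ℝ) 1,
          |iteratedDerivWithin l (homOp A lam h b) (Icc 0 1) x| ≤
            D / (1 - q ^ (l + 1)) * Hd l) := by
      intro b
      set f : ℕ → ℝ → ℝ :=
        fun n x => Pfun A lam n b * h (A^[n] b) (PiProd A lam n b * x) with hf_def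
      have hfsm : ∀ n, ContDiffOn ℝ l (f n) (Icc 0 1) := by
        intro n
        have hcomp : ContDiffOn ℝ l (fun x => h (A^[n] b) (PiProd A lam n b * x)) (Icc 0 1) :=
          (hsm (A^[n] b)).comp ((contDiff_const.mul contDiff_id).contDiffOn) (hmapsPi n b)
        exact contDiffOn_const.mul hcomp
      have hiter : ∀ j, j ≤ l → ∀ n, ∀ x ∈ Icc (0:ℝ) 1,
          iteratedDerivWithin j (f n) (Icc 0 1) x
            = Pfun A lam n b * PiProd A lam n b ^ j *
                iteratedDerivWithin j (h (A^[n] b)) (Icc 0 1) (PiProd A lam n b * x) := by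
        intro j hj n x hx
        have hsmj : ContDiffOn ℝ j (h (A^[n] b)) (Icc 0 1) :=
          (hsm (A^[n] b)).of_le (by exact_mod_cast Nat.cast_le.2 hj)
        have hcomp : ContDiffOn ℝ j (fun x => h (A^[n] b) (PiProd A lam n b * x)) (Icc 0 1) :=
          hsmj.comp ((contDiff_const.mul contDiff_id).contDiffOn) (hmapsPi n b)
        rw [show f n = fun x => Pfun A lam n b *
            (fun x => h (A^[n] b) (PiProd A lam n b * x)) x from rfl]
        rw [iteratedDerivWithin_const_mul hx hsU _ (hcomp x hx),
          iter_scale (hPi_pos n b) (hPi1 n b) j _ hsmj x hx]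
        ring
      set u : ℕ → ℕ → ℝ := fun j n => (D * Hd j) * (q ^ (j + 1)) ^ n with hu_def
      have hub : ∀ j, j ≤ l → ∀ n, ∀ x ∈ Icc (0:ℝ) 1,
          |iteratedDerivWithin j (f n) (Icc 0 1) x| ≤ u j n := by
        intro j hj n x hx
        rw [hiter j hj n x hx, abs_mul, abs_mul, abs_of_nonneg (hP_nonneg n b),
          abs_of_nonneg (pow_nonneg (hPi_pos n b).le j)]
        have hpow : (q ^ (j + 1)) ^ n = q ^ n * (q ^ n) ^ j := by
          rw [← pow_mul, ← pow_mul, ← pow_add]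
          congr 1; ring
        calc Pfun A lam n b * PiProd A lam n b ^ j *
              |iteratedDerivWithin j (h (A^[n] b)) (Icc 0 1) (PiProd A lam n b * x)|
            ≤ (D * q ^ n) * ((q ^ n) ^ j) * Hd j := by
              refine mul_le_mul (mul_le_mul (hP_le n b)
                (pow_le_pow_left₀ (hPi_pos n b).le (hPi_le n b) j)
                (pow_nonneg (hPi_pos n b).le j) (by positivity)) (hHd j hj _ _ (hmapsPi n b x hx)) (abs_nonneg _)
                (by positivity)
          _ = u j n := by rw [hu_def]; simp only []; rw [hpow]; ring
      have husum : ∀ j, j ≤ l → Summable (u j) :=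
        fun j hj => (summable_geometric_of_lt_one (by positivity) (hq1 j)).mul_left _
      obtain ⟨hSsm, hSder⟩ := tsum_key l f u hfsm husum hub
      have hhom : homOp A lam h b = fun x => -∑' n, f n x := rfl
      have hneg : ∀ x ∈ Icc (0:ℝ) 1,
          iteratedDerivWithin l (fun x => -∑' n, f n x) (Icc 0 1) x
            = -iteratedDerivWithin l (fun x => ∑' n, f n x) (Icc 0 1) x := by
        intro x hx
        exact iteratedDerivWithin_fun_neg _
      refine ⟨?_, ?_, ?_⟩
      · rw [hhom]; exact hSsm.neg
      · intro x hx
        rw [hhom, hneg x hx, hSder x hx, neg_inj]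
        exact tsum_congr fun n => hiter l le_rfl n x hx
      · intro x hx
        rw [hhom, hneg x hx, hSder x hx, abs_neg]
        have hgsum : HasSum (fun n : ℕ => (D * Hd l) * (q ^ (l + 1)) ^ n)
            ((D * Hd l) * (1 - q ^ (l + 1))⁻¹) :=
          (hasSum_geometric_of_lt_one (by positivity) (hq1 l)).mul_left _
        have key := tsum_of_norm_bounded hgsum (fun n => by
          rw [Real.norm_eq_abs]; exact hub l le_rfl n x hx)
        rw [Real.norm_eq_abs] at key
        refine key.trans (le_of_eq ?_)
        rw [div_eq_mul_inv]
        ring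
    exact ⟨fun b => (main b).1, fun b => (main b).2.1, fun b => (main b).2.2⟩
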